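/- Under the same hypotheses, every proper directed path in D with target node 1 and source node in Tops_A(1,2) contains exactly one edge of E_A(1,2). -/

import Mathlib

open Matrix BigOperators

def SupportedOn {V : Type} (E : V → V → Prop) (Λ : Matrix V V ℝ) : Prop :=
  ∀ u v, ¬ E u v → Λ u v = 0

def Acyclic {V : Type} (E : V → V → Prop) : Prop :=
  ∀ v, ¬ Relation.TransGen E v v

def cycAdj (p : ℕ) (i j : Fin p) : Prop :=
  (i.1 + 1) % p = j.1 ∨ (j.1 + 1) % p = i.1

structure Trek {V : Type} (E : V → V → Prop) (u v : V) where
  left : List V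
  right : List V
  left_ne : left ≠ []
  right_ne : right ≠ []
  top_eq : left.head left_ne = right.head right_ne
  chain_left : List.Chain' E left
  chain_right : List.Chain' E right
  last_left : left.getLast left_ne = u
  last_right : right.getLast right_ne = v

def Trek.top {V : Type} {E : V → V → Prop} {u v : V} (τ : Trek E u v) : V :=
  τ.left.head τ.left_ne

def edgeProd {V : Type} (Λ : Matrix V V ℝ) (l : List V) : ℝ :=
  ((l.zip l.tail).map fun p => Λ p.1 p.2).prod

def Trek.mono {V : Type} {E : V → V → Prop} {u v : V} (Λ Ω : Matrix V V ℝ)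
    (τ : Trek E u v) : ℝ :=
  Ω τ.top τ.top * edgeProd Λ τ.left * edgeProd Λ τ.right

structure TrekSystem {V : Type} (E : V → V → Prop) {n : ℕ} (x y : Fin n → V) where
  perm : Equiv.Perm (Fin n)
  trek : ∀ i, Trek E (x i) (y (perm i))

def TrekSystem.NoSided {V : Type} {E : V → V → Prop} {n : ℕ} {x y : Fin n → V}
    (S : TrekSystem E x y) : Prop :=
  ∀ i j, i ≠ j →
    (∀ a : V, ¬(a ∈ (S.trek i).left ∧ a ∈ (S.trek j).left)) ∧
    (∀ a : V, ¬(a ∈ (S.trek i).right ∧ a ∈ (S.trek j).right))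

structure DWalk {U : Type} (E : U → U → Prop) (u v : U) where
  steps : List (Bool × U × U)
  ne : steps ≠ []
  first_eq : (steps.head ne).2.1 = u
  last_eq : (steps.getLast ne).2.2 = v
  edge : ∀ s ∈ steps, (s.1 = true → E s.2.1 s.2.2) ∧ (s.1 = false → E s.2.2 s.2.1)
  chain : List.Chain' (fun s t : Bool × U × U => s.2.2 = t.2.1) steps

def stepPairOK {U : Type} (A : Set U) (s t : Bool × U × U) : Prop :=
  ((s.1 = true ∧ t.1 = false) → s.2.2 ∈ A) ∧ (¬(s.1 = true ∧ t.1 = false) → s.2.2 ∉ A)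

def DWalk.DConn {U : Type} {E : U → U → Prop} {u v : U} (A : Set U)
    (w : DWalk E u v) : Prop :=
  List.Chain' (stepPairOK A) w.steps

def topOf {U : Type} : List (Bool × U × U) → U → U
  | [], u => u
  | (d, a, _b) :: rest, _ => if d then a else topOf rest _b

def DWalk.top {U : Type} {E : U → U → Prop} {u v : U} (w : DWalk E u v) : U :=
  topOf w.steps u

def TopsA {U : Type} (E : U → U → Prop) (A : Set U) (u v : U) : Set U :=
  {t | ∃ w : DWalk E u v, w.DConn A ∧ w.top = t}

def anAvoid {U : Type} (E : U → U → Prop) (A : Set U) (x : U) : Set U :=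
  {u | u ∉ A ∧ Relation.ReflTransGen (fun a b => E a b ∧ a ∉ A ∧ b ∉ A) u x}

def EA {U : Type} (E : U → U → Prop) (A : Set U) (n1 n2 : U) : Set (U × U) :=
  {e | E e.1 e.2 ∧ e.1 ∈ TopsA E A n1 n2 ∧ e.2 ∈ anAvoid E A n1 ∧ e.2 ∉ TopsA E A n1 n2}

def IsProperPath {U : Type} (E : U → U → Prop) (A : Set U) (l : List U) : Prop :=
  l ≠ [] ∧ List.Chain' (fun a b => E a b ∧ a ∉ A) l

def DigraphCov {U : Type} [Fintype U] [DecidableEq U] (E : U → U → Prop) :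
    Set (Matrix U U ℝ) :=
  {S | ∃ Λ Ω : Matrix U U ℝ, SupportedOn E Λ ∧ Ω.IsDiag ∧ (∀ u, 0 < Ω u u) ∧
        S = ((1 - Λ)⁻¹)ᵀ * Ω * (1 - Λ)⁻¹}

def BSupported {V : Type} (B : SimpleGraph V) (Ω : Matrix V V ℝ) : Prop :=
  ∀ u v, u ≠ v → ¬ B.Adj u v → Ω u v = 0

def MixedCov {V : Type} [Fintype V] [DecidableEq V] (D : V → V → Prop)
    (B : SimpleGraph V) : Set (Matrix V V ℝ) :=
  {S | ∃ Λ Ω : Matrix V V ℝ, SupportedOn D Λ ∧ Ω.PosDef ∧ BSupported B Ω ∧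
        S = ((1 - Λ)⁻¹)ᵀ * Ω * (1 - Λ)⁻¹}

def StrictlyGaussianCausal {V : Type} [Fintype V] [DecidableEq V]
    (D : V → V → Prop) (B : SimpleGraph V) : Prop :=
  ∃ (U : Type) (iF : Fintype U) (iD : DecidableEq U) (ι : V ↪ U) (E : U → U → Prop),
    Acyclic E ∧
      (fun S : Matrix U U ℝ => S.submatrix ι ι) '' (@DigraphCov U iF iD E) = MixedCov D B

def Chordal {V : Type} (B : SimpleGraph V) : Prop :=
  ∀ n : ℕ, 4 ≤ n → ∀ f : ZMod n → V, Function.Injective f →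
    (∀ i, B.Adj (f i) (f (i + 1))) →
    ∃ i j : ZMod n, j ≠ i + 1 ∧ i ≠ j + 1 ∧ i ≠ j ∧ B.Adj (f i) (f j)

def ChainGraph {V : Type} (D : V → V → Prop) (B : SimpleGraph V) : Prop :=
  ¬ ∃ u v, D u v ∧ Relation.ReflTransGen (fun a b => D a b ∨ B.Adj a b) v u


-- helper: nodes of a proper path ending at n1 (with n1 ∉ A) are in anAvoid
lemma inAvoid_aux {U : Type} (E : U → U → Prop) (A : Set U) (n1 : U) (hn1 : n1 ∉ A) :
    ∀ l : List U, ∀ hne : l ≠ [], List.Chain' (fun a b => E a b ∧ a ∉ A) l →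
      l.getLast hne = n1 → ∀ x ∈ l, x ∈ anAvoid E A n1 := by
  intro l
  induction l with
  | nil => intro h; exact absurd rfl h
  | cons x t ih =>
    intro hne hch hlast z hz
    cases t with
    | nil =>
      have hx : x = n1 := by simpa using hlast
      have hz' : z = x := by simpa using hz
      subst hz'; subst hx
      exact ⟨hn1, Relation.ReflTransGen.refl⟩
    | cons y t' =>
      have hcons := List.isChain_cons_cons.mp hch
      have hlast' : (y :: t').getLast (by simp) = n1 := by
        rw [List.getLast_cons (by simp : (y :: t') ≠ [])] at hlast; exact hlast
      have ihy := ih (by simp) hcons.2 hlast'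
      rcases List.mem_cons.mp hz with rfl | hz'
      · have hy := ihy y (by simp)
        exact ⟨hcons.1.2, Relation.ReflTransGen.head ⟨hcons.1.1, hcons.1.2, hy.1⟩ hy.2⟩
      · exact ihy z hz'

lemma topOf_reaches {U : Type} (E : U → U → Prop) :
    ∀ (L : List (Bool × U × U)) (u : U),
      (∀ s ∈ L, (s.1 = true → E s.2.1 s.2.2) ∧ (s.1 = false → E s.2.2 s.2.1)) →
      List.Chain' (fun s t : Bool × U × U => s.2.2 = t.2.1) L →
      (∀ s, L.head? = some s → s.2.1 = u) →
      Relation.ReflTransGen E (topOf L u) u := by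
  intro L
  induction L with
  | nil => intro u _ _ _; exact Relation.ReflTransGen.refl
  | cons s rest ih =>
    intro u hedge hch hhead
    obtain ⟨d, x, y⟩ := s
    have hx : x = u := hhead _ rfl
    cases d with
    | true =>
      simp only [topOf, if_pos]
      rw [hx]
    | false =>
      have hEyx : E y x := (hedge _ List.mem_cons_self).2 rfl
      have hch' := List.isChain_cons.mp hch
      have hrest : Relation.ReflTransGen E (topOf rest y) y :=
        ih y (fun s hs => hedge s (List.mem_cons_of_mem _ hs)) hch'.2
          (fun s hs => ((hch'.1 s hs)).symm)
      show Relation.ReflTransGen E (topOf ((false, x, y) :: rest) u) u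
      simp only [topOf, if_neg]
      rw [← hx]
      exact hrest.tail hEyx

lemma topInsert {U : Type} (E : U → U → Prop) (A : Set U) (a b : U)
    (hab : E a b) (ha : a ∉ A) (hb : b ∉ A) :
    ∀ (L : List (Bool × U × U)) (u v : U), L ≠ [] →
      (∀ s ∈ L, (s.1 = true → E s.2.1 s.2.2) ∧ (s.1 = false → E s.2.2 s.2.1)) →
      List.Chain' (fun s t : Bool × U × U => s.2.2 = t.2.1) L →
      List.Chain' (stepPairOK A) L →
      (∀ s, L.head? = some s → s.2.1 = u) →
      (∀ s, L.getLast? = some s → s.2.2 = v) →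
      topOf L u = b →
      ∃ L' : List (Bool × U × U), L' ≠ [] ∧
        (∀ s ∈ L', (s.1 = true → E s.2.1 s.2.2) ∧ (s.1 = false → E s.2.2 s.2.1)) ∧
        List.Chain' (fun s t : Bool × U × U => s.2.2 = t.2.1) L' ∧
        List.Chain' (stepPairOK A) L' ∧
        (∀ s, L'.head? = some s → s.2.1 = u) ∧
        (∀ s, L'.getLast? = some s → s.2.2 = v) ∧
        topOf L' u = a := by
  intro L
  induction L with
  | nil => intro u v h; exact absurd rfl h
  | cons s rest ih =>
    intro u v _ hedge hch hOK hhead hlast htop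
    obtain ⟨d, x, y⟩ := s
    have hx : x = u := hhead _ rfl
    cases d with
    | true =>
      -- top is x = u = b
      have hbu : u = b := by rw [← hx]; simpa [topOf] using htop
      refine ⟨(false, u, a) :: (true, a, u) :: (true, x, y) :: rest, by simp, ?_, ?_, ?_, ?_, ?_, ?_⟩
      · intro s hs
        rcases List.mem_cons.mp hs with rfl | hs
        · exact ⟨fun h => absurd h (by simp), fun _ => by show E a u; rw [hbu]; exact hab⟩
        rcases List.mem_cons.mp hs with rfl | hs
        · exact ⟨fun _ => by show E a u; rw [hbu]; exact hab, fun h => absurd h (by simp)⟩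
        · exact hedge s hs
      · exact List.IsChain.cons_cons rfl (List.IsChain.cons_cons hx.symm hch)
      · refine List.IsChain.cons_cons ?_ (List.IsChain.cons_cons ?_ hOK)
        · exact ⟨fun h => absurd h.1 (by simp), fun _ => ha⟩
        · exact ⟨fun h => absurd h.2 (by simp), fun _ => by show u ∉ A; rw [hbu]; exact hb⟩
      · intro s hs
        rw [List.head?_cons] at hs
        cases hs; rfl
      · intro s hs
        rw [List.getLast?_cons_cons, List.getLast?_cons_cons] at hs
        exact hlast s hs
      · simp [topOf]
    | false =>
      cases rest with
      | nil =>
        have hyb : y = b := by simpa [topOf] using htop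
        have hyv : y = v := hlast _ rfl
        have hEyx : E y x := (hedge _ List.mem_cons_self).2 rfl
        have hEay : E a y := by rw [hyb]; exact hab
        have hyA : y ∉ A := by rw [hyb]; exact hb
        refine ⟨[(false, x, y), (false, y, a), (true, a, y)], by simp, ?_, ?_, ?_, ?_, ?_, ?_⟩
        · intro s hs
          rcases List.mem_cons.mp hs with rfl | hs
          · exact ⟨fun h => absurd h (by simp), fun _ => hEyx⟩
          rcases List.mem_cons.mp hs with rfl | hs
          · exact ⟨fun h => absurd h (by simp), fun _ => hEay⟩
          have : s = (true, a, y) := by simpa using hs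
          subst this
          exact ⟨fun _ => hEay, fun h => absurd h (by simp)⟩
        · exact List.IsChain.cons_cons rfl (List.IsChain.cons_cons rfl (List.isChain_singleton _))
        · refine List.IsChain.cons_cons ?_ (List.IsChain.cons_cons ?_ (List.isChain_singleton _))
          · exact ⟨fun h => absurd h.1 (by simp), fun _ => hyA⟩
          · exact ⟨fun h => absurd h.1 (by simp), fun _ => ha⟩
        · intro s hs
          rw [List.head?_cons] at hs
          cases hs; exact hx
        · intro s hs
          rw [List.getLast?_cons_cons, List.getLast?_cons_cons] at hs
          have h' : (true, a, y) = s := by simpa using hs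
          subst h'
          exact hyv
        · simp [topOf]
      | cons s0 rest0 =>
        have hy0 : y = s0.2.1 := (List.isChain_cons_cons.mp hch).1
        have hyA : y ∉ A :=
          (List.isChain_cons_cons.mp hOK).1.2 (fun h => absurd h.1 (by simp))
        have htop' : topOf (s0 :: rest0) y = b := by simpa [topOf] using htop
        obtain ⟨L'', hne'', hedge'', hch'', hOK'', hhead'', hlast'', htop''⟩ :=
          ih y v (by simp)
            (fun s hs => hedge s (List.mem_cons_of_mem _ hs))
            (List.isChain_cons_cons.mp hch).2
            (List.isChain_cons_cons.mp hOK).2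
            (by intro s hs; rw [List.head?_cons] at hs; cases hs; exact hy0.symm)
            (by intro s hs; exact hlast s (by rw [List.getLast?_cons_cons]; exact hs))
            htop'
        cases L'' with
        | nil => exact absurd rfl hne''
        | cons t1 tl =>
          refine ⟨(false, x, y) :: t1 :: tl, by simp, ?_, ?_, ?_, ?_, ?_, ?_⟩
          · intro s hs
            rcases List.mem_cons.mp hs with rfl | hs
            · exact hedge _ List.mem_cons_self
            · exact hedge'' s hs
          · exact List.IsChain.cons_cons (hhead'' t1 rfl).symm hch''
          · exact List.IsChain.cons_cons ⟨fun h => absurd h.1 (by simp), fun _ => hyA⟩ hOK''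
          · intro s hs
            rw [List.head?_cons] at hs
            cases hs; exact hx
          · intro s hs
            rw [List.getLast?_cons_cons] at hs
            exact hlast'' s hs
          · simpa [topOf] using htop''


lemma tops_anc {U : Type} (E : U → U → Prop) (A : Set U) (n1 n2 : U) (a b : U)
    (hab : E a b) (ha : a ∉ A) (hb : b ∉ A)
    (hbT : b ∈ TopsA E A n1 n2) : a ∈ TopsA E A n1 n2 := by
  obtain ⟨w, hconn, htop⟩ := hbT
  obtain ⟨L', hne', hedge, hch, hOK, hhead, hlast, htop'⟩ :=
    topInsert E A a b hab ha hb w.steps n1 n2 w.ne w.edge w.chain hconn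
      (fun s hs => by
        rw [List.head?_eq_head w.ne] at hs; cases hs; exact w.first_eq)
      (fun s hs => by
        rw [List.getLast?_eq_getLast w.ne] at hs; cases hs; exact w.last_eq)
      htop
  exact ⟨⟨L', hne', hhead _ (List.head?_eq_head hne'),
    hlast _ (List.getLast?_eq_getLast hne'), hedge, hch⟩, hOK, htop'⟩

open scoped Classical in
lemma count_zero_aux {U : Type} (E : U → U → Prop) (A : Set U) (n1 n2 : U) (hn1A : n1 ∉ A) :
    ∀ l : List U, ∀ hne : l ≠ [], List.Chain' (fun a b => E a b ∧ a ∉ A) l →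
      l.getLast hne = n1 → l.head hne ∉ TopsA E A n1 n2 →
      ((l.zip l.tail).countP fun e => decide (e ∈ EA E A n1 n2)) = 0 := by
  intro l
  induction l with
  | nil => intro h; exact absurd rfl h
  | cons x t ih =>
    intro hne hch hlast hhead
    cases t with
    | nil => simp
    | cons y t' =>
      have hcons := List.isChain_cons_cons.mp hch
      have hlast' : (y :: t').getLast (by simp) = n1 := by
        rw [List.getLast_cons (by simp : (y :: t') ≠ [])] at hlast; exact hlast
      have hyA : y ∉ A :=
        (inAvoid_aux E A n1 hn1A (y :: t') (by simp) hcons.2 hlast' y (by simp)).1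
      have hyT : y ∉ TopsA E A n1 n2 := fun h =>
        hhead (tops_anc E A n1 n2 x y hcons.1.1 hcons.1.2 hyA h)
      have hrec := ih (by simp) hcons.2 hlast' (by simpa using hyT)
      have hnotEA : (x, y) ∉ EA E A n1 n2 := fun h => hhead h.2.1
      show List.countP _ ((x, y) :: (y :: t').zip t') = 0
      rw [List.countP_cons_of_neg (by simpa using hnotEA)]
      exact hrec

open scoped Classical in
lemma count_one_aux {U : Type} (E : U → U → Prop) (A : Set U) (n1 n2 : U) (hn1A : n1 ∉ A)
    (hn1T : n1 ∉ TopsA E A n1 n2) :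
    ∀ l : List U, ∀ hne : l ≠ [], List.Chain' (fun a b => E a b ∧ a ∉ A) l →
      l.getLast hne = n1 → l.head hne ∈ TopsA E A n1 n2 →
      ((l.zip l.tail).countP fun e => decide (e ∈ EA E A n1 n2)) = 1 := by
  intro l
  induction l with
  | nil => intro h; exact absurd rfl h
  | cons x t ih =>
    intro hne hch hlast hhead
    cases t with
    | nil =>
      have hx : x = n1 := by simpa using hlast
      exact absurd (hx ▸ hhead) hn1T
    | cons y t' =>
      have hcons := List.isChain_cons_cons.mp hch
      have hlast' : (y :: t').getLast (by simp) = n1 := by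
        rw [List.getLast_cons (by simp : (y :: t') ≠ [])] at hlast; exact hlast
      have hyAv : y ∈ anAvoid E A n1 :=
        inAvoid_aux E A n1 hn1A (y :: t') (by simp) hcons.2 hlast' y (by simp)
      by_cases hyT : y ∈ TopsA E A n1 n2
      · have hrec := ih (by simp) hcons.2 hlast' (by simpa using hyT)
        have hnotEA : (x, y) ∉ EA E A n1 n2 := fun h => h.2.2.2 hyT
        show List.countP _ ((x, y) :: (y :: t').zip t') = 1
        rw [List.countP_cons_of_neg (by simpa using hnotEA)]
        exact hrec
      · have hEA : (x, y) ∈ EA E A n1 n2 := ⟨hcons.1.1, by simpa using hhead, hyAv, hyT⟩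
        have hrec := count_zero_aux E A n1 n2 hn1A (y :: t') (by simp) hcons.2 hlast'
          (by simpa using hyT)
        show List.countP _ ((x, y) :: (y :: t').zip t') = 1
        rw [List.countP_cons_of_pos (by simpa using hEA)]
        rw [show (y :: t').zip t' = (y :: t').zip (y :: t').tail from rfl, hrec]


open scoped Classical in
theorem stmt14 {U : Type} (E : U → U → Prop) (hE : Acyclic E) (A : Set U)
    {p : ℕ} (hp : 4 ≤ p) (cyc : Fin p ↪ U) (hA : ∀ i, cyc i ∉ A)
    (hdc : ∀ i j : Fin p, i ≠ j →
      ((∃ w : DWalk E (cyc i) (cyc j), w.DConn A) ↔ cycAdj p i j))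
    (l : List U) (hne : l ≠ []) (hl : IsProperPath E A l)
    (hsrc : l.head hne ∈ TopsA E A (cyc ⟨0, by omega⟩) (cyc ⟨1, by omega⟩))
    (htgt : l.getLast hne = (cyc ⟨0, by omega⟩)) :
    ((l.zip l.tail).countP fun e => decide (e ∈ EA E A (cyc ⟨0, by omega⟩) (cyc ⟨1, by omega⟩))) = 1 := by
  have hn1A : cyc ⟨0, by omega⟩ ∉ A := hA _
  have hn1T : cyc ⟨0, by omega⟩ ∉ TopsA E A (cyc ⟨0, by omega⟩) (cyc ⟨1, by omega⟩) := by
    rintro ⟨w, hconn, htop⟩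
    obtain ⟨L, hneL, hfirst, hlastw, hedgew, hchw⟩ := w
    cases L with
    | nil => exact absurd rfl hneL
    | cons s rest =>
      obtain ⟨d, x, y⟩ := s
      have hx : x = cyc ⟨0, by omega⟩ := hfirst
      cases d with
      | false =>
        have htop' : topOf rest y = cyc ⟨0, by omega⟩ := by
          simpa [DWalk.top, topOf] using htop
        have hch' := List.isChain_cons.mp hchw
        have hreach : Relation.ReflTransGen E (topOf rest y) y :=
          topOf_reaches E rest y (fun s hs => hedgew s (List.mem_cons_of_mem _ hs))
            hch'.2 (fun s hs => (hch'.1 s hs).symm)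
        have hEyx : E y x := (hedgew _ List.mem_cons_self).2 rfl
        rw [htop'] at hreach
        rw [hx] at hEyx
        exact hE _ (Relation.TransGen.tail' hreach hEyx)
      | true =>
        have hne1 : (⟨p - 1, by omega⟩ : Fin p) ≠ ⟨0, by omega⟩ := by
          simp only [ne_eq, Fin.mk.injEq]; omega
        have hadj1 : cycAdj p ⟨p - 1, by omega⟩ ⟨0, by omega⟩ := by
          left
          show (p - 1 + 1) % p = 0
          rw [Nat.sub_add_cancel (by omega), Nat.mod_self]
        obtain ⟨w1, hconn1⟩ := (hdc _ _ hne1).mpr hadj1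
        have hjunc : ∀ s', w1.steps.getLast? = some s' → s'.2.2 = cyc ⟨0, by omega⟩ := by
          intro s' hs'
          rw [List.getLast?_eq_getLast w1.ne] at hs'
          cases hs'; exact w1.last_eq
        have hne2 : (⟨p - 1, by omega⟩ : Fin p) ≠ ⟨1, by omega⟩ := by
          simp only [ne_eq, Fin.mk.injEq]; omega
        have hw2 : ∃ w2 : DWalk E (cyc ⟨p - 1, by omega⟩) (cyc ⟨1, by omega⟩), w2.DConn A := by
          refine ⟨⟨w1.steps ++ (true, x, y) :: rest, by simp [w1.ne], ?_, ?_, ?_, ?_⟩, ?_⟩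
          · rw [List.head_append_left w1.ne]; exact w1.first_eq
          · rw [List.getLast_append_of_ne_nil _ (by simp : ((true, x, y) :: rest : List _) ≠ [])]
            exact hlastw
          · intro s hs
            rcases List.mem_append.mp hs with hs | hs
            · exact w1.edge s hs
            · exact hedgew s hs
          · refine List.IsChain.append w1.chain hchw ?_
            intro a ha b hb
            rw [List.head?_cons] at hb
            cases hb
            show a.2.2 = x
            rw [hx]
            exact hjunc a ha
          · refine List.IsChain.append hconn1 hconn ?_
            intro a ha b hb
            rw [List.head?_cons] at hb
            cases hb
            constructor
            · rintro ⟨-, h⟩; exact absurd h (by simp)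
            · intro _
              rw [hjunc a ha]
              exact hn1A
        have hadj2 := (hdc _ _ hne2).mp hw2
        rcases hadj2 with h | h
        · have h1 : (p - 1 + 1) % p = 1 := h
          rw [Nat.sub_add_cancel (by omega), Nat.mod_self] at h1
          omega
        · have h2 : (1 + 1) % p = p - 1 := h
          rw [Nat.mod_eq_of_lt (by omega)] at h2
          omega
  exact count_one_aux E A _ _ hn1A hn1T l hne hl.2 htgt hsrc
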